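/- Suppose on an open set of a surface one has orthonormal principal frame {e₁, e₂} with κ₂ = 0 identically and κ₁ nowhere zero, ω(e₂) = 0, and the Gauss equation yields e₂e₂(κ₁) = (2/κ₁) e₂(κ₁)². If moreover μ := e₂(|Φ|²)/2 satisfies μ = -(|Φ|²/(2κ₁)) e₂(κ₁) and e₂(μ) = 1, then differentiating gives e₂e₂(κ₁) = (2/κ₁)e₂(κ₁)² - 2κ₁/|Φ|²; equating the two expressions for e₂e₂(κ₁) forces κ₁ = 0, a contradiction. Hence: there is no flat (K = 0) α-stationary surface with nonconstant principal curvature κ₁. -/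

import Mathlib

/-- Case K = 0 of Theorem 1 (flat α-stationary surfaces).  On an open piece of a
flat α-stationary surface in principal coordinates with κ₂ = 0 and κ₁ nowhere
zero, e₂ acts as a derivation: the Gauss equation gives e₂e₂(κ₁) = (2/κ₁)e₂(κ₁)²,
while the structural equations give μ := e₂(|Φ|²)/2 = -(|Φ|²/(2κ₁))e₂(κ₁) and
e₂(μ) = 1.  Differentiating μ yields e₂e₂(κ₁) = (2/κ₁)e₂(κ₁)² - 2κ₁/|Φ|²;
comparing the two expressions forces κ₁ = 0, a contradiction.  Hence there is no
flat (K = 0) α-stationary surface with nonconstant principal curvature κ₁. -/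
theorem no_flat_stationary_with_nonconstant_curvature
    {M : Type*} [Nonempty M]
    (D : (M → ℝ) → (M → ℝ))
    (hadd : ∀ f g : M → ℝ, D (f + g) = D f + D g)
    (hmul : ∀ f g : M → ℝ, D (f * g) = D f * g + f * D g)
    (hconst : ∀ r : ℝ, D (fun _ => r) = 0)
    (κ₁ Φsq : M → ℝ)
    (hκ : ∀ x, κ₁ x ≠ 0)
    (hΦ : ∀ x, 0 < Φsq x)
    (hGauss : ∀ x, D (D κ₁) x = 2 / κ₁ x * (D κ₁ x) ^ 2)
    (hμ : ∀ x, D Φsq x / 2 = -(Φsq x / (2 * κ₁ x)) * D κ₁ x)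
    (hμ' : ∀ x, D (fun y => D Φsq y / 2) x = 1) :
    False := by
  obtain ⟨x⟩ := ‹Nonempty M›
  -- product rule identity: D Φsq * κ₁ + Φsq * D κ₁ = 0
  have hfun : D Φsq * κ₁ + Φsq * D κ₁ = 0 := by
    funext y
    have h := hμ y
    have hk := hκ y
    simp only [Pi.add_apply, Pi.mul_apply, Pi.zero_apply]
    field_simp at h
    linarith
  -- apply D
  have h1 : D (D Φsq) * κ₁ + D Φsq * D κ₁ + (D Φsq * D κ₁ + Φsq * D (D κ₁)) = 0 := by
    rw [← hmul, ← hmul, ← hadd, hfun]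
    have : (0 : M → ℝ) = (fun _ => (0 : ℝ)) := rfl
    rw [this, hconst 0]
    rfl
  -- compute D (D Φsq) = 2
  have h2 : D (D Φsq) x = 2 := by
    have e : (fun y => D Φsq y / 2) = D Φsq * (fun _ => (2:ℝ)⁻¹) := by
      funext y; simp [div_eq_mul_inv]
    have h := hμ' x
    rw [e, hmul, hconst] at h
    simp only [Pi.add_apply, Pi.mul_apply, Pi.zero_apply, mul_zero, add_zero] at h
    linarith
  have h1x := congrFun h1 x
  simp only [Pi.add_apply, Pi.mul_apply, Pi.zero_apply] at h1x
  have hg := hGauss x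
  have hm := hμ x
  have hk := hκ x
  have hp := hΦ x
  rw [h2, hg] at h1x
  have hDΦ : D Φsq x = -(Φsq x / κ₁ x) * D κ₁ x := by
    field_simp at hm ⊢; linarith
  rw [hDΦ] at h1x
  have h4 : κ₁ x ^ 4 = 0 := by
    field_simp at h1x
    linear_combination (κ₁ x ^ 2 / 2) * h1x
  exact absurd h4 (pow_ne_zero 4 hk)
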